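/- In the shot-noise Cox process setup, assume Φ is a simple point process with Φ(X) < ∞ almost surely, fix k ≥ 1, and assume: (a) almost surely E[1(Φ(X) = k) · Φ^{(k)}(A) | Λ] = exp(−∫_X T_Λ dμ) · ∫_A ∏_{j=1}^k T_Λ(x_j) μ^{⊗k}(dx) for every measurable A ⊆ X^k (the Janossy formula of a Poisson process with intensity T_Λ·μ, applied conditionally); and (b) Λ satisfies the Poisson exponential-moment formula with intensity ν. Then for every measurable A ⊆ X^k: E[1(Φ(X) = k) · Φ^{(k)}(A)] = ∫_A j_k(x₁,…,x_k) μ^{⊗k}(dx), where the Janossy density is j_k(x₁,…,x_k) = exp(−∫_{X×(0,∞)} (1 − e^{−γ}) ν(dθ, dγ)) · Σ_{𝒫} ∏_{J∈𝒫} ∫_{X×(0,∞)} e^{−γ} γ^{|J|} ∏_{j∈J} κ(x_j; θ) ν(dθ, dγ). -/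

import Mathlib

open MeasureTheory

/-- `expNeg t = e^{-t}` for `t ∈ [0,∞]`, with `expNeg ∞ = 0`. -/
noncomputable def expNeg (t : ENNReal) : ENNReal :=
  if t = ⊤ then 0 else ENNReal.ofReal (Real.exp (-t.toReal))


lemma expNeg_top : expNeg ⊤ = 0 := if_pos rfl

lemma expNeg_zero : expNeg 0 = 1 := by simp [expNeg]

lemma expNeg_ne_top {t : ENNReal} (ht : t ≠ ⊤) : expNeg t = ENNReal.ofReal (Real.exp (-t.toReal)) :=
  if_neg ht

lemma measurable_expNeg : Measurable expNeg := by
  unfold expNeg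
  exact Measurable.ite (measurableSet_singleton ⊤) measurable_const
    (ENNReal.measurable_ofReal.comp (Real.measurable_exp.comp ENNReal.measurable_toReal.neg))

lemma expNeg_le_one (t : ENNReal) : expNeg t ≤ 1 := by
  unfold expNeg
  split
  · exact zero_le_one
  · rw [show (1 : ENNReal) = ENNReal.ofReal 1 by simp]
    exact ENNReal.ofReal_le_ofReal (Real.exp_le_one_iff.2 (neg_nonpos.2 ENNReal.toReal_nonneg))

lemma expNeg_anti {s t : ENNReal} (h : s ≤ t) : expNeg t ≤ expNeg s := by
  by_cases ht : t = ⊤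
  · rw [ht, expNeg_top]; exact zero_le
  · have hs : s ≠ ⊤ := fun hs => ht (top_le_iff.mp (hs ▸ h))
    rw [expNeg_ne_top ht, expNeg_ne_top hs]
    exact ENNReal.ofReal_le_ofReal (Real.exp_le_exp.2 (neg_le_neg
      ((ENNReal.toReal_le_toReal hs ht).2 h)))

lemma one_sub_le_expNeg (t : ENNReal) : 1 - t ≤ expNeg t := by
  by_cases ht : t = ⊤
  · simp [ht]
  · have e1 : 1 - t = ENNReal.ofReal (1 - t.toReal) := by
      rw [ENNReal.ofReal_sub _ ENNReal.toReal_nonneg, ENNReal.ofReal_one,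
        ENNReal.ofReal_toReal ht]
    rw [e1, expNeg_ne_top ht]
    refine ENNReal.ofReal_le_ofReal ?_
    have := Real.add_one_le_exp (-t.toReal)
    linarith

lemma one_sub_expNeg_le (t : ENNReal) : 1 - expNeg t ≤ t := by
  by_cases ht : t = ⊤
  · exact ht ▸ le_top
  · rw [expNeg_ne_top ht]
    have e1 : 1 - ENNReal.ofReal (Real.exp (-t.toReal))
        = ENNReal.ofReal (1 - Real.exp (-t.toReal)) := by
      rw [ENNReal.ofReal_sub _ (Real.exp_nonneg _), ENNReal.ofReal_one]
    rw [e1]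
    conv_rhs => rw [← ENNReal.ofReal_toReal ht]
    refine ENNReal.ofReal_le_ofReal ?_
    have := Real.add_one_le_exp (-t.toReal)
    linarith

lemma iInf_inv_nat_mul {a : ENNReal} (ha : a ≠ ⊤) :
    ⨅ m : ℕ, ((m : ENNReal) + 1)⁻¹ * a = 0 := by
  have h0 : Filter.Tendsto (fun m : ℕ => ((m : ENNReal) + 1)⁻¹) Filter.atTop (nhds 0) := by
    have := ENNReal.tendsto_inv_nat_nhds_zero.comp (Filter.tendsto_add_atTop_nat 1)
    convert this using 2 with m
    simp [Function.comp]
  have h1 : Filter.Tendsto (fun m : ℕ => ((m : ENNReal) + 1)⁻¹ * a) Filter.atTop (nhds 0) := by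
    have := ENNReal.Tendsto.mul_const h0 (Or.inr ha)
    simpa using this
  have hanti : Antitone (fun m : ℕ => ((m : ENNReal) + 1)⁻¹ * a) := by
    intro m m' hmm
    refine mul_le_mul_left (ENNReal.inv_le_inv.mpr ?_) a
    exact_mod_cast Nat.add_le_add_right hmm 1
  exact tendsto_nhds_unique (tendsto_atTop_iInf hanti) h1

lemma iSup_expNeg_of_le {a : ENNReal} (ha : a ≠ ⊤) (b : ℕ → ENNReal)
    (hb : ∀ m, b m ≤ ((m : ENNReal) + 1)⁻¹ * a) : ⨆ m, expNeg (b m) = 1 := by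
  refine le_antisymm (iSup_le fun m => expNeg_le_one _) ?_
  have e1 : (1 : ENNReal) = 1 - ⨅ m : ℕ, ((m : ENNReal) + 1)⁻¹ * a := by
    rw [iInf_inv_nat_mul ha, tsub_zero]
  rw [e1, ENNReal.sub_iInf]
  exact iSup_mono fun m => le_trans (tsub_le_tsub_left (hb m) 1) (one_sub_le_expNeg _)

open ProbabilityTheory in
/-- Truncated kernel: restrict `Λ ω` to `D` when its mass there is at most `m`. -/
noncomputable def truncKer {Ω Z : Type*} [MeasurableSpace Ω] [MeasurableSpace Z]
    (Λ : Ω → Measure Z) (hΛ : Measurable Λ) {D : Set Z} (hD : MeasurableSet D) (m : ℕ) :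
    Kernel Ω Z where
  toFun ω := if Λ ω D ≤ m then (Λ ω).restrict D else 0
  measurable' := by
    refine Measure.measurable_measure.mpr fun s hs => ?_
    have he : (fun ω => (if Λ ω D ≤ m then (Λ ω).restrict D else 0) s)
        = fun ω => Set.indicator {ω' | Λ ω' D ≤ m} (fun ω' => Λ ω' (s ∩ D)) ω := by
      ext ω
      by_cases h : Λ ω D ≤ m
      · simp only [if_pos h, Measure.restrict_apply hs,
          Set.indicator_of_mem (show ω ∈ {ω' | Λ ω' D ≤ m} from h)]
      · simp only [if_neg h, Measure.coe_zero, Pi.zero_apply,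
          Set.indicator_of_notMem (show ω ∉ {ω' | Λ ω' D ≤ m} from h)]
    rw [he]
    refine Measurable.indicator ((Measure.measurable_coe (hs.inter hD)).comp hΛ) ?_
    exact ((Measure.measurable_coe hD).comp hΛ) measurableSet_Iic

lemma truncKer_apply {Ω Z : Type*} [MeasurableSpace Ω] [MeasurableSpace Z]
    (Λ : Ω → Measure Z) (hΛ : Measurable Λ) {D : Set Z} (hD : MeasurableSet D) (m : ℕ) (ω : Ω) :
    truncKer Λ hΛ hD m ω = if Λ ω D ≤ m then (Λ ω).restrict D else 0 := rfl

open ProbabilityTheory in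
instance truncKer_finite {Ω Z : Type*} [MeasurableSpace Ω] [MeasurableSpace Z]
    (Λ : Ω → Measure Z) (hΛ : Measurable Λ) {D : Set Z} (hD : MeasurableSet D) (m : ℕ) :
    IsFiniteKernel (truncKer Λ hΛ hD m) := by
  refine ⟨⟨(m : ENNReal), ENNReal.natCast_lt_top m, fun ω => ?_⟩⟩
  rw [truncKer_apply]
  split
  · rw [Measure.restrict_apply_univ]; assumption
  · simp


set_option maxHeartbeats 2000000

/-- The set `D_k` of `k`-tuples with pairwise distinct coordinates. -/
def distinctTuples (X : Type*) (k : ℕ) : Set (Fin k → X) :=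
  {t : Fin k → X | Function.Injective t}

/-- A random measure `Λ` satisfies the Poisson exponential-moment formula with
intensity `ν`. -/
def PoissonExpMoment {Ω Y : Type*} [MeasurableSpace Ω] [MeasurableSpace Y]
    (P : Measure Ω) (Λ : Ω → Measure Y) (ν : Measure Y) : Prop :=
  ∀ (m : ℕ), 1 ≤ m → ∀ h : Y → ENNReal, Measurable h →
    ∀ c : Fin m → Y → ENNReal, (∀ j, Measurable (c j)) →
    ∫⁻ ω, expNeg (∫⁻ z, h z ∂(Λ ω)) * ∏ j, ∫⁻ z, c j z ∂(Λ ω) ∂P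
      = expNeg (∫⁻ z, (1 - expNeg (h z)) ∂ν)
        * ∑ pt : Finpartition (Finset.univ : Finset (Fin m)),
            ∏ J ∈ pt.parts, ∫⁻ z, expNeg (h z) * ∏ j ∈ J, c j z ∂ν

/-- Janossy density of a shot-noise Cox process.
Under the conditional Janossy formula (a) and the Poisson exponential-moment
formula (b) for `Λ`, the `k`-th Janossy measure of `Φ` has density
`j_k(x₁,…,x_k) = e^{−∫(1−e^{−γ})dν} Σ_𝒫 ∏_{J∈𝒫} ∫ e^{−γ} γ^{|J|} ∏_{j∈J} κ(xⱼ;θ) dν`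
with respect to `μ^{⊗k}`. -/
theorem sncp_janossy_density
    {Ω X : Type*} [MeasurableSpace Ω] [MeasurableSpace X]
    (P : Measure Ω) [IsProbabilityMeasure P]
    (μ : Measure X) [SigmaFinite μ]
    (ν : Measure (X × NNReal)) [SigmaFinite ν] (hν0 : ν {z | z.2 = 0} = 0)
    (κ : X → X → ENNReal) (hκ : Measurable (Function.uncurry κ))
    (hκ1 : ∀ θ : X, ∫⁻ y, κ y θ ∂μ = 1)
    (Λ : Ω → Measure (X × NNReal)) (hΛmeas : Measurable Λ)
    (hΛ : ∀ h : X × NNReal → ENNReal, Measurable h →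
      ∫⁻ ω, expNeg (∫⁻ z, h z ∂(Λ ω)) ∂P = expNeg (∫⁻ z, (1 - expNeg (h z)) ∂ν))
    (hTfin : ∀ᵐ ω ∂P, ∀ᵐ y ∂μ, (∫⁻ z, (z.2 : ENNReal) * κ y z.1 ∂(Λ ω)) ≠ ⊤)
    (Φ : Ω → Measure X) (hΦmeas : Measurable Φ)
    (hcond : ∀ f : X → ENNReal, Measurable f →
      ∀ G : Measure (X × NNReal) → ENNReal, Measurable G →
      ∫⁻ ω, expNeg (∫⁻ y, f y ∂(Φ ω)) * G (Λ ω) ∂P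
        = ∫⁻ ω, expNeg (∫⁻ y, (1 - expNeg (f y))
            * (∫⁻ z, (z.2 : ENNReal) * κ y z.1 ∂(Λ ω)) ∂μ) * G (Λ ω) ∂P)
    -- `Φ` is a simple point process with a.s. finitely many points
    (hpp : ∀ᵐ ω ∂P, ∀ B : Set X, MeasurableSet B → Φ ω B = ⊤ ∨ ∃ n : ℕ, Φ ω B = n)
    (hsimple : ∀ᵐ ω ∂P, ∀ y : X, Φ ω {y} ≤ 1)
    (hfin : ∀ᵐ ω ∂P, Φ ω Set.univ < ⊤)
    (k : ℕ) (hk : 1 ≤ k)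
    -- (a) conditional Janossy formula of a Poisson process with intensity `T_Λ·μ`
    (ha : ∀ A : Set (Fin k → X), MeasurableSet A →
      ∀ G : Measure (X × NNReal) → ENNReal, Measurable G →
      ∫⁻ ω, (if Φ ω Set.univ = (k : ENNReal)
          then ((Measure.pi fun _ : Fin k => Φ ω).restrict (distinctTuples X k)) A
          else 0) * G (Λ ω) ∂P
        = ∫⁻ ω, (expNeg (∫⁻ y, (∫⁻ z, (z.2 : ENNReal) * κ y z.1 ∂(Λ ω)) ∂μ)
            * ∫⁻ t in A, ∏ j, (∫⁻ z, (z.2 : ENNReal) * κ (t j) z.1 ∂(Λ ω))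
                ∂(Measure.pi fun _ : Fin k => μ)) * G (Λ ω) ∂P)
    -- (b) Poisson exponential-moment formula for `Λ`
    (hb : PoissonExpMoment P Λ ν) :
    ∀ A : Set (Fin k → X), MeasurableSet A →
      ∫⁻ ω, (if Φ ω Set.univ = (k : ENNReal)
          then ((Measure.pi fun _ : Fin k => Φ ω).restrict (distinctTuples X k)) A
          else 0) ∂P
        = ∫⁻ t in A,
            expNeg (∫⁻ z, (1 - expNeg (z.2 : ENNReal)) ∂ν)
              * ∑ pt : Finpartition (Finset.univ : Finset (Fin k)),
                  ∏ J ∈ pt.parts,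
                    ∫⁻ z, expNeg (z.2 : ENNReal) * (z.2 : ENNReal) ^ J.card
                      * ∏ j ∈ J, κ (t j) z.1 ∂ν
          ∂(Measure.pi fun _ : Fin k => μ) := by
  intro A hA
  -- basic measurability
  have hz2 : Measurable fun z : X × NNReal => (z.2 : ENNReal) :=
    measurable_coe_nnreal_ennreal.comp measurable_snd
  have hfmeas : Measurable (Function.uncurry
      fun (y : X) (z : X × NNReal) => (z.2 : ENNReal) * κ y z.1) := by
    refine Measurable.mul ?_ ?_
    · exact measurable_coe_nnreal_ennreal.comp (measurable_snd.comp measurable_snd)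
    · exact hκ.comp (measurable_fst.prodMk (measurable_fst.comp measurable_snd))
  have hfy : ∀ y : X, Measurable fun z : X × NNReal => (z.2 : ENNReal) * κ y z.1 :=
    fun y => hfmeas.comp measurable_prodMk_left
  have hκy : ∀ θ : X, Measurable fun y => κ y θ :=
    fun θ => hκ.comp (measurable_id.prodMk measurable_const)
  have hSmeas : ∀ n, MeasurableSet (spanningSets ν n) :=
    fun n => measurableSet_spanningSets ν n
  have hDmeas : ∀ n, MeasurableSet (disjointed (spanningSets ν) n) :=
    MeasurableSet.disjointed hSmeas
  -- a.s. finiteness of Λ on the spanning sets of ν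
  have haefin : ∀ᵐ ω ∂P, ∀ n, Λ ω (spanningSets ν n) ≠ ⊤ := by
    rw [MeasureTheory.ae_all_iff]
    intro n
    set c : ℕ → ENNReal := fun m => ((m : ENNReal) + 1)⁻¹ with hc
    have hcne : ∀ m, c m ≠ 0 := by
      intro m
      simp only [hc, ne_eq, ENNReal.inv_eq_zero]
      exact fun h => (ENNReal.add_lt_top.mpr
        ⟨ENNReal.natCast_lt_top m, ENNReal.one_lt_top⟩).ne h
    have hΛSn : Measurable fun ω => Λ ω (spanningSets ν n) :=
      (Measure.measurable_coe (hSmeas n)).comp hΛmeas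
    have hkey : ∀ m, (∫⁻ ω, expNeg (c m * Λ ω (spanningSets ν n)) ∂P)
        = expNeg ((1 - expNeg (c m)) * ν (spanningSets ν n)) := by
      intro m
      have h1 := hΛ ((spanningSets ν n).indicator fun _ => c m)
        (measurable_const.indicator (hSmeas n))
      have hl : ∀ ω, (∫⁻ z, (spanningSets ν n).indicator (fun _ => c m) z ∂(Λ ω))
          = c m * Λ ω (spanningSets ν n) := by
        intro ω
        rw [lintegral_indicator (hSmeas n)]
        exact setLIntegral_const _ _
      have hr : (∫⁻ z, (1 - expNeg ((spanningSets ν n).indicator (fun _ => c m) z)) ∂ν)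
          = (1 - expNeg (c m)) * ν (spanningSets ν n) := by
        have hpt : ∀ z, (1 - expNeg ((spanningSets ν n).indicator (fun _ => c m) z))
            = (spanningSets ν n).indicator (fun _ => 1 - expNeg (c m)) z := by
          intro z
          by_cases hz : z ∈ spanningSets ν n <;>
            simp [hz, expNeg_zero]
        rw [lintegral_congr hpt, lintegral_indicator (hSmeas n)]
        exact setLIntegral_const _ _
      simp only [hl, hr] at h1
      exact h1
    set g : Ω → ENNReal := fun ω => ⨆ m, expNeg (c m * Λ ω (spanningSets ν n)) with hg
    have hgm : Measurable g :=
      Measurable.iSup fun m => measurable_expNeg.comp (hΛSn.const_mul (c m))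
    have hgle : ∀ ω, g ω ≤ 1 := fun ω => iSup_le fun m => expNeg_le_one _
    have hmono : Monotone fun m => fun ω => expNeg (c m * Λ ω (spanningSets ν n)) := by
      intro m m' hmm
      intro ω
      refine expNeg_anti (mul_le_mul_left ?_ _)
      simp only [hc]
      refine ENNReal.inv_le_inv.mpr ?_
      exact_mod_cast Nat.add_le_add_right hmm 1
    have hgint : ∫⁻ ω, g ω ∂P = 1 := by
      show (∫⁻ ω, ⨆ m, expNeg (c m * Λ ω (spanningSets ν n)) ∂P) = 1
      rw [lintegral_iSup (f := fun m ω => expNeg (c m * Λ ω (spanningSets ν n)))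
        (fun m => measurable_expNeg.comp (hΛSn.const_mul (c m))) hmono]
      simp only [hkey]
      refine iSup_expNeg_of_le (measure_spanningSets_lt_top ν n).ne _ fun m => ?_
      exact mul_le_mul_left (one_sub_expNeg_le (c m)) _
    have hsub : ∫⁻ ω, (1 - g ω) ∂P = 0 := by
      rw [lintegral_sub hgm (by rw [hgint]; exact ENNReal.one_ne_top)
        (Filter.Eventually.of_forall hgle), hgint, lintegral_one, measure_univ, tsub_self]
    have h0 := (lintegral_eq_zero_iff (measurable_const.sub hgm)).mp hsub
    filter_upwards [h0] with ω hω
    intro hcontra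
    have hg0 : g ω = 0 := by
      rw [hg]
      simp only
      have hz : ∀ m, expNeg (c m * Λ ω (spanningSets ν n)) = 0 := by
        intro m
        rw [hcontra, ENNReal.mul_top (hcne m), expNeg_top]
      simp [hz]
    simp only [Pi.zero_apply, Pi.sub_apply, hg0, tsub_zero] at hω
    exact one_ne_zero hω
  -- the jointly measurable version of T
  set Tb : Ω → X → ENNReal := fun ω y =>
    ∑' n, ⨆ m, ∫⁻ z, (z.2 : ENNReal) * κ y z.1
      ∂(truncKer Λ hΛmeas (hDmeas n) m ω) with hTbdef
  have hTbmeas : Measurable (Function.uncurry Tb) := by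
    refine Measurable.ennreal_tsum fun n => ?_
    refine Measurable.iSup fun m => ?_
    have hgf : Measurable (Function.uncurry
        fun (p : Ω × X) (z : X × NNReal) => (z.2 : ENNReal) * κ p.2 z.1) := by
      refine Measurable.mul ?_ ?_
      · exact measurable_coe_nnreal_ennreal.comp (measurable_snd.comp measurable_snd)
      · exact hκ.comp ((measurable_snd.comp measurable_fst).prodMk
          (measurable_fst.comp measurable_snd))
    exact Measurable.lintegral_kernel_prod_right
      (κ := (truncKer Λ hΛmeas (hDmeas n) m).comap (Prod.fst : Ω × X → Ω) measurable_fst) hgf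
  have hTb_eq : ∀ ω, (∀ n, Λ ω (spanningSets ν n) ≠ ⊤) → ∀ y,
      Tb ω y = ∫⁻ z, (z.2 : ENNReal) * κ y z.1 ∂(Λ ω) := by
    intro ω hω y
    have hDfin : ∀ n, Λ ω (disjointed (spanningSets ν) n) ≠ ⊤ := fun n =>
      (lt_of_le_of_lt (measure_mono (disjointed_subset _ n))
        (lt_top_iff_ne_top.mpr (hω n))).ne
    have hsup : ∀ n, (⨆ m, ∫⁻ z, (z.2 : ENNReal) * κ y z.1
        ∂(truncKer Λ hΛmeas (hDmeas n) m ω))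
        = ∫⁻ z in disjointed (spanningSets ν) n, (z.2 : ENNReal) * κ y z.1 ∂(Λ ω) := by
      intro n
      obtain ⟨M, hM⟩ := ENNReal.exists_nat_gt (hDfin n)
      refine le_antisymm (iSup_le fun m => ?_) (le_iSup_of_le M ?_)
      · rw [truncKer_apply]
        split
        · exact le_rfl
        · simp
      · rw [truncKer_apply, if_pos hM.le]
    have h5 : ∀ n, (∫⁻ z in disjointed (spanningSets ν) n,
        (z.2 : ENNReal) * κ y z.1 ∂(Λ ω))
        = ∫⁻ z, (disjointed (spanningSets ν) n).indicator
            (fun z : X × NNReal => (z.2 : ENNReal) * κ y z.1) z ∂(Λ ω) :=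
      fun n => (lintegral_indicator (hDmeas n) _).symm
    rw [hTbdef]
    simp only
    rw [tsum_congr hsup, tsum_congr h5,
      ← lintegral_tsum (fun n => ((hfy y).indicator (hDmeas n)).aemeasurable)]
    refine lintegral_congr fun z => ?_
    have hzmem : z ∈ ⋃ n, disjointed (spanningSets ν) n := by
      rw [iUnion_disjointed, iUnion_spanningSets]
      exact Set.mem_univ z
    obtain ⟨n₀, hn₀⟩ := Set.mem_iUnion.mp hzmem
    rw [tsum_eq_single n₀ ?_]
    · exact Set.indicator_of_mem hn₀ _
    · intro m hm
      refine Set.indicator_of_notMem ?_ _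
      exact fun hzm => Set.disjoint_left.mp (disjoint_disjointed _ hm) hzm hn₀
  -- Tonelli: the conditional intensity mass equals the Λ-mass of γ
  have hUV : ∀ ω, (∀ n, Λ ω (spanningSets ν n) ≠ ⊤) →
      (∫⁻ y, (∫⁻ z, (z.2 : ENNReal) * κ y z.1 ∂(Λ ω)) ∂μ)
        = ∫⁻ z, (z.2 : ENNReal) ∂(Λ ω) := by
    intro ω hω
    haveI : SigmaFinite (Λ ω) :=
      ⟨⟨⟨spanningSets ν, fun _ => trivial,
        fun n => lt_top_iff_ne_top.mpr (hω n), iUnion_spanningSets ν⟩⟩⟩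
    rw [lintegral_lintegral_swap hfmeas.aemeasurable]
    refine lintegral_congr fun z => ?_
    rw [lintegral_const_mul _ (hκy z.1), hκ1 z.1, mul_one]
  -- step 1: apply (a) with G = 1
  have h1 := ha A hA (fun _ => 1) measurable_const
  simp only [mul_one] at h1
  rw [h1]
  -- step 2: a.s. rewrite the integrand
  have hUmeas : Measurable fun ω => ∫⁻ z, (z.2 : ENNReal) ∂(Λ ω) :=
    (Measure.measurable_lintegral hz2).comp hΛmeas
  have hTbsec : ∀ ω, Measurable (Tb ω) :=
    fun ω => hTbmeas.comp measurable_prodMk_left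
  have hprod_t : ∀ ω, Measurable fun t : Fin k → X => ∏ j, Tb ω (t j) := by
    intro ω
    exact Finset.measurable_prod _ fun j _ => (hTbsec ω).comp (measurable_pi_apply j)
  have step2 : (∫⁻ ω, (expNeg (∫⁻ y, (∫⁻ z, (z.2 : ENNReal) * κ y z.1 ∂(Λ ω)) ∂μ)
        * ∫⁻ t in A, ∏ j, (∫⁻ z, (z.2 : ENNReal) * κ (t j) z.1 ∂(Λ ω))
            ∂(Measure.pi fun _ : Fin k => μ)) ∂P)
      = ∫⁻ ω, ∫⁻ t in A, (expNeg (∫⁻ z, (z.2 : ENNReal) ∂(Λ ω)) * ∏ j, Tb ω (t j))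
          ∂(Measure.pi fun _ : Fin k => μ) ∂P := by
    refine lintegral_congr_ae ?_
    filter_upwards [haefin] with ω hω
    rw [hUV ω hω]
    have e2 : (∫⁻ t in A, ∏ j, (∫⁻ z, (z.2 : ENNReal) * κ (t j) z.1 ∂(Λ ω))
          ∂(Measure.pi fun _ : Fin k => μ))
        = ∫⁻ t in A, ∏ j, Tb ω (t j) ∂(Measure.pi fun _ : Fin k => μ) :=
      lintegral_congr fun t => Finset.prod_congr rfl fun j _ => (hTb_eq ω hω (t j)).symm
    rw [e2, ← lintegral_const_mul _ (hprod_t ω)]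
  rw [step2]
  -- step 3: swap the order of integration
  have hjoint : Measurable (Function.uncurry fun (ω : Ω) (t : Fin k → X) =>
      expNeg (∫⁻ z, (z.2 : ENNReal) ∂(Λ ω)) * ∏ j, Tb ω (t j)) := by
    refine Measurable.mul ?_ ?_
    · exact (measurable_expNeg.comp hUmeas).comp measurable_fst
    · exact Finset.measurable_prod _ fun j _ =>
        hTbmeas.comp (measurable_fst.prodMk ((measurable_pi_apply j).comp measurable_snd))
  rw [lintegral_lintegral_swap hjoint.aemeasurable]
  -- step 4: apply (b) pointwise in t
  refine lintegral_congr fun t => ?_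
  have hbk := hb k hk (fun z => (z.2 : ENNReal)) hz2
    (fun j z => (z.2 : ENNReal) * κ (t j) z.1) (fun j => hfy (t j))
  have e4 : (∫⁻ ω, expNeg (∫⁻ z, (z.2 : ENNReal) ∂(Λ ω)) * ∏ j, Tb ω (t j) ∂P)
      = ∫⁻ ω, expNeg (∫⁻ z, (z.2 : ENNReal) ∂(Λ ω))
          * ∏ j, (∫⁻ z, (z.2 : ENNReal) * κ (t j) z.1 ∂(Λ ω)) ∂P := by
    refine lintegral_congr_ae ?_
    filter_upwards [haefin] with ω hω
    rw [Finset.prod_congr rfl fun j _ => hTb_eq ω hω (t j)]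
  rw [e4, hbk]
  congr 1
  refine Finset.sum_congr rfl fun pt _ => Finset.prod_congr rfl fun J _ => ?_
  refine lintegral_congr fun z => ?_
  rw [Finset.prod_mul_distrib, Finset.prod_const, ← mul_assoc]
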